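/- Let F be an algebraically closed field, β₁, β₅, β₈ ∈ F with β₅ ≠ 0, e₁ = (1,0,0), and let k₁, k₂ ≥ 2 be integers. Then for every A ∈ O(F) there exist X, Y ∈ O(F) such that A = (0, e₁; 0, 0)·X^{k₁} + (β₁, 0; β₅e₁, β₈)·Y^{k₂}. -/

import Mathlib

/-- Zorn vector matrices: the split octonion algebra over `F`. -/
structure Oct (F : Type*) where
  a : F              -- upper-left scalar η
  b : Fin 3 → F      -- upper-right vector x
  c : Fin 3 → F      -- lower-left vector y
  d : F              -- lower-right scalar ζ

namespace Oct

variable {F : Type*} [Field F]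

/-- standard bilinear form on F^3 -/
def dot (x y : Fin 3 → F) : F := x 0 * y 0 + x 1 * y 1 + x 2 * y 2

/-- cross product on F^3, satisfying ⟨x ∧ y, z⟩ = det(x,y,z) -/
def cross (x y : Fin 3 → F) : Fin 3 → F :=
  ![x 1 * y 2 - x 2 * y 1, x 2 * y 0 - x 0 * y 2, x 0 * y 1 - x 1 * y 0]

instance : Add (Oct F) :=
  ⟨fun A B => ⟨A.a + B.a, A.b + B.b, A.c + B.c, A.d + B.d⟩⟩

instance : Mul (Oct F) :=
  ⟨fun A B =>
    ⟨A.a * B.a + dot A.b B.c,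
     A.a • B.b + B.d • A.b + cross A.c B.c,
     A.d • B.c + B.a • A.c + cross A.b B.b,
     A.d * B.d + dot A.c B.b⟩⟩

instance : SMul F (Oct F) :=
  ⟨fun t A => ⟨t * A.a, t • A.b, t • A.c, t * A.d⟩⟩

instance : One (Oct F) := ⟨⟨1, 0, 0, 1⟩⟩

/-- powers, via A^{n+1} = A · A^n (well-defined by power-associativity) -/
def pow (A : Oct F) : ℕ → Oct F
  | 0 => 1
  | n + 1 => A * pow A n

/-- octonion conjugation -/
def conj (A : Oct F) : Oct F := ⟨A.d, -A.b, -A.c, A.a⟩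

/-- the norm form -/
def norm (A : Oct F) : F := A.a * A.d - dot A.b A.c

-- AUXILIARY LEMMAS

lemma ext' {A B : Oct F} (ha : A.a = B.a) (hb : A.b = B.b) (hc : A.c = B.c)
    (hd : A.d = B.d) : A = B := by
  cases A; cases B; simp_all

lemma mul_def (A B : Oct F) : A * B =
    ⟨A.a * B.a + dot A.b B.c,
     A.a • B.b + B.d • A.b + cross A.c B.c,
     A.d • B.c + B.a • A.c + cross A.b B.b,
     A.d * B.d + dot A.c B.b⟩ := rfl

lemma add_def (A B : Oct F) : A + B = ⟨A.a + B.a, A.b + B.b, A.c + B.c, A.d + B.d⟩ := rfl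

lemma smul_def (t : F) (A : Oct F) : t • A = ⟨t * A.a, t • A.b, t • A.c, t * A.d⟩ := rfl

lemma one_def : (1 : Oct F) = ⟨1, 0, 0, 1⟩ := rfl

lemma dot_comm (x y : Fin 3 → F) : dot x y = dot y x := by simp [dot]; ring

lemma cross_self (x : Fin 3 → F) : cross x x = 0 := by
  funext i; fin_cases i <;> simp [cross] <;> ring

lemma cross_zero (x : Fin 3 → F) : cross x 0 = 0 := by
  funext i; fin_cases i <;> simp [cross]

lemma dot_zero (x : Fin 3 → F) : dot x 0 = 0 := by simp [dot]

lemma zero_dot (x : Fin 3 → F) : dot 0 x = 0 := by simp [dot]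

lemma dot_smul (t : F) (x y : Fin 3 → F) : dot x (t • y) = t * dot x y := by
  simp [dot]; ring

lemma smul_dot (t : F) (x y : Fin 3 → F) : dot (t • x) y = t * dot x y := by
  simp [dot]; ring

lemma cross_smul (t : F) (x y : Fin 3 → F) : cross x (t • y) = t • cross x y := by
  funext i; fin_cases i <;> simp [cross] <;> ring

lemma smul_cross (t : F) (x y : Fin 3 → F) : cross (t • x) y = t • cross x y := by
  funext i; fin_cases i <;> simp [cross] <;> ring

lemma mul_one' (A : Oct F) : A * 1 = A := by
  apply ext' <;> simp [mul_def, one_def, dot_zero, cross_zero]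

lemma oct_smul_smul (s t : F) (A : Oct F) : s • (t • A) = (s * t) • A := by
  apply ext' <;> simp [smul_def, smul_smul] <;> ring

lemma one_smul' (A : Oct F) : (1 : F) • A = A := by
  apply ext' <;> simp [smul_def]

lemma mul_smul_right (t : F) (A B : Oct F) : A * (t • B) = t • (A * B) := by
  apply ext' <;>
    simp [mul_def, smul_def, dot_smul, smul_dot, cross_smul, smul_cross, smul_smul,
      smul_add, mul_comm, mul_left_comm] <;> ring

lemma smul_mul_left (t : F) (A B : Oct F) : (t • A) * B = t • (A * B) := by
  apply ext' <;>
    simp [mul_def, smul_def, dot_smul, smul_dot, cross_smul, smul_cross, smul_smul,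
      smul_add, mul_comm, mul_left_comm] <;> ring

lemma sq_eq (A : Oct F) (h : A.a * A.d = dot A.b A.c) :
    A * A = (A.a + A.d) • A := by
  apply ext'
  · show A.a * A.a + dot A.b A.c = (A.a + A.d) * A.a
    rw [← h]; ring
  · show A.a • A.b + A.d • A.b + cross A.c A.c = (A.a + A.d) • A.b
    rw [cross_self]; funext i; simp [Pi.smul_apply, smul_eq_mul]; ring
  · show A.d • A.c + A.a • A.c + cross A.b A.b = (A.a + A.d) • A.c
    rw [cross_self]; funext i; simp [Pi.smul_apply, smul_eq_mul]; ring
  · show A.d * A.d + dot A.c A.b = (A.a + A.d) * A.d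
    rw [dot_comm, ← h]; ring

lemma pow_of_sq (A : Oct F) (γ : F) (h : A * A = γ • A) :
    ∀ n, pow A (n + 1) = γ ^ n • A := by
  intro n
  induction n with
  | zero => simp [pow, mul_one', one_smul']
  | succ m ih =>
    show A * pow A (m + 1) = γ ^ (m + 1) • A
    rw [ih, mul_smul_right, h, oct_smul_smul]
    congr 1
    rw [pow_succ]

lemma exists_pow_of [IsAlgClosed F] (k : ℕ) (hk : 1 ≤ k) (R : Oct F)
    (hn : R.a * R.d = dot R.b R.c) (ht : R.a + R.d ≠ 0) :
    ∃ X : Oct F, pow X k = R := by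
  obtain ⟨m, rfl⟩ : ∃ m, k = m + 1 := ⟨k - 1, by omega⟩
  obtain ⟨γ, hγ⟩ := IsAlgClosed.exists_pow_nat_eq (R.a + R.d) (n := m + 1) (by omega)
  have hγ0 : γ ≠ 0 := by
    rintro rfl
    rw [zero_pow (by omega)] at hγ
    exact ht hγ.symm
  refine ⟨(γ ^ m)⁻¹ • R, ?_⟩
  have hX : ((γ ^ m)⁻¹ • R) * ((γ ^ m)⁻¹ • R) = γ • ((γ ^ m)⁻¹ • R) := by
    rw [smul_mul_left, mul_smul_right, sq_eq R hn, oct_smul_smul, oct_smul_smul,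
      oct_smul_smul]
    congr 1
    rw [← hγ, pow_succ]
    field_simp
  rw [pow_of_sq _ _ hX, oct_smul_smul]
  rw [mul_inv_cancel₀ (pow_ne_zero _ hγ0), one_smul']


lemma key_eq (β₁ β₅ β₈ : F) (hβ₅ : β₅ ≠ 0) (A : Oct F) (qd pa : F) :
    A = (⟨0, ![1, 0, 0], 0, 0⟩ : Oct F) *
        ⟨pa, ![0, A.c 2 + β₈ * (A.b 1) / β₅, β₈ * (A.b 2) / β₅ - A.c 1],
          ![A.a - β₁ * (A.c 0) / β₅, 0, 0], A.b 0 - β₁ * ((A.d - β₈ * qd) / β₅)⟩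
      + (⟨β₁, 0, ![β₅, 0, 0], β₈⟩ : Oct F) *
        ⟨A.c 0 / β₅, ![(A.d - β₈ * qd) / β₅, 0, 0], ![0, A.b 2 / β₅, -(A.b 1) / β₅], qd⟩ := by
  apply ext'
  · simp [mul_def, add_def, dot, cross]
    field_simp
    ring
  · funext i; fin_cases i <;>
      simp [mul_def, add_def, dot, cross] <;>
      (try field_simp) <;>
      (try ring)
  · funext i; fin_cases i <;>
      simp [mul_def, add_def, dot, cross] <;>
      (try field_simp) <;>
      (try ring)
  · simp [mul_def, add_def, dot, cross]
    field_simp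
    ring

end Oct

open Oct
theorem stmt_15 {F : Type*} [Field F] [IsAlgClosed F] (β₁ β₅ β₈ : F)
    (hβ₅ : β₅ ≠ 0) (k₁ k₂ : ℕ) (hk₁ : 2 ≤ k₁) (hk₂ : 2 ≤ k₂) (A : Oct F) :
    ∃ X Y : Oct F,
      A = (⟨0, ![1, 0, 0], 0, 0⟩ : Oct F) * pow X k₁
        + (⟨β₁, 0, ![β₅, 0, 0], β₈⟩ : Oct F) * pow Y k₂ := by
  classical
  obtain ⟨qd, hqd⟩ : ∃ q : F, q = if A.c 0 = 0 then 1 else 0 := ⟨_, rfl⟩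
  obtain ⟨pd, hpd⟩ : ∃ p : F, p = A.b 0 - β₁ * ((A.d - β₈ * qd) / β₅) := ⟨_, rfl⟩
  obtain ⟨pa, hpa⟩ : ∃ p : F, p = if pd = 0 then 1 else 0 := ⟨_, rfl⟩
  have hQn : (A.c 0 / β₅) * qd =
      dot ![(A.d - β₈ * qd) / β₅, 0, 0] ![0, A.b 2 / β₅, -(A.b 1) / β₅] := by
    by_cases h : A.c 0 = 0 <;> simp [dot, hqd, h]
  have hQt : (A.c 0 / β₅) + qd ≠ 0 := by
    by_cases h : A.c 0 = 0 <;> simp [hqd, h, div_eq_zero_iff, hβ₅]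
  have hPn : pa * pd =
      dot ![0, A.c 2 + β₈ * (A.b 1) / β₅, β₈ * (A.b 2) / β₅ - A.c 1]
        ![A.a - β₁ * (A.c 0) / β₅, 0, 0] := by
    by_cases h : pd = 0 <;> simp [dot, hpa, h]
  have hPt : pa + pd ≠ 0 := by
    by_cases h : pd = 0 <;> simp [hpa, h]
  obtain ⟨X, hX⟩ := exists_pow_of k₁ (by omega)
    ⟨pa, ![0, A.c 2 + β₈ * (A.b 1) / β₅, β₈ * (A.b 2) / β₅ - A.c 1],
      ![A.a - β₁ * (A.c 0) / β₅, 0, 0], pd⟩ hPn hPt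
  obtain ⟨Y, hY⟩ := exists_pow_of k₂ (by omega)
    ⟨A.c 0 / β₅, ![(A.d - β₈ * qd) / β₅, 0, 0], ![0, A.b 2 / β₅, -(A.b 1) / β₅], qd⟩ hQn hQt
  refine ⟨X, Y, ?_⟩
  rw [hX, hY, hpd]
  exact key_eq β₁ β₅ β₈ hβ₅ A qd pa
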